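/- Let d ≥ 2 be even, let λ > 1, identify Fin d with ℤ/dℤ, and for each x define the half-block A_x = {x, x+1, …, x + d/2 − 1} (mod d). Define the half-block channel W(y|x) = (2λ/(d(1+λ))) if y ∈ A_x and (2/(d(1+λ))) if y ∉ A_x. Then: (i) every entrywise ratio W(y|x)/W(y|x') lies in {λ^{-1}, 1, λ}, so W satisfies the λ-ratio bound (W is ε₀-LDP with λ = e^{ε₀}); and (ii) for the opposite pair b = a + d/2 (mod d), the likelihood ratio w(y) = W(y|b)/W(y|a) equals λ^{-1} on A_a and λ on its complement, and χ²(W(·|b) ‖ W(·|a)) = (λ−1)²/λ. -/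

import Mathlib

open Finset BigOperators
open scoped Classical

lemma hb_flip (d k : ℕ) [NeZero d] (hk : d = k + k) (hd : 2 ≤ d) (z : ZMod d) :
    (z - (k : ZMod d)).val < k ↔ ¬ z.val < k := by
  have hkd : k < d := by omega
  have hkk : ((k : ZMod d)) + k = 0 := by
    rw [← Nat.cast_add, ← hk, ZMod.natCast_self]
  have hneg : -(k : ZMod d) = k := by linear_combination -hkk
  have hvk : ((k : ZMod d)).val = k := ZMod.val_cast_of_lt hkd
  have hzd : z.val < d := ZMod.val_lt z
  rw [sub_eq_add_neg, hneg, ZMod.val_add, hvk]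
  rcases lt_or_ge z.val k with h | h
  · rw [Nat.mod_eq_of_lt (by omega)]; omega
  · have h2 : (z.val + k) % d = z.val + k - d := by
      rw [Nat.mod_eq_sub_mod (by omega), Nat.mod_eq_of_lt (by omega)]
    rw [h2]; omega

lemma hb_card (d k : ℕ) [NeZero d] (hkd : k ≤ d) (a : ZMod d) :
    (univ.filter (fun y : ZMod d => (y - a).val < k)).card = k := by
  have h1 : (univ.filter (fun y : ZMod d => (y - a).val < k)).card
      = (univ.filter (fun z : ZMod d => z.val < k)).card := by
    apply Finset.card_nbij' (fun y => y - a) (fun z => z + a)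
    · intro y hy; simpa using (mem_filter.mp hy).2
    · intro z hz; simp only [mem_filter, mem_univ, true_and] at hz ⊢
      simpa using hz
    · intro y _; simp
    · intro z _; simp
  rw [h1]
  have h2 : (univ.filter (fun z : ZMod d => z.val < k)).card
      = (Finset.range k).card := by
    refine Finset.card_nbij' (fun z : ZMod d => z.val) (fun n : ℕ => (n : ZMod d)) ?_ ?_ ?_ ?_
    · intro z hz; simp only [mem_coe, coe_filter, Set.mem_setOf_eq, mem_filter, mem_univ, true_and] at hz
      simpa using hz
    · intro n hn; simp only [mem_coe, coe_range, Set.mem_Iio, mem_range] at hn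
      simp only [mem_coe, coe_filter, Set.mem_setOf_eq, mem_filter, mem_univ, true_and]
      rw [ZMod.val_cast_of_lt (by omega)]; exact hn
    · intro z _; simp [ZMod.natCast_val, ZMod.cast_id]
    · intro n hn; simp only [mem_coe, coe_range, Set.mem_Iio, mem_range] at hn
      exact ZMod.val_cast_of_lt (by omega)
  rw [h2, Finset.card_range]

/-- **Explicit obstruction family: the cyclic half-block channel** (Theorem 5.2(i)–(ii)).
For even `d` and `λ > 1`, the half-block channel `W(y|x) = 2λ/(d(1+λ))` if `y ∈ A_x`
(where `A_x = {x, …, x + d/2 − 1}` mod `d`) and `2/(d(1+λ))` otherwise satisfies: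
(i) every entrywise ratio lies in `{λ⁻¹, 1, λ}` (hence the `λ`-ratio bound holds);
(ii) for the opposite pair `b = a + d/2`, the likelihood ratio equals `λ⁻¹` on `A_a`
and `λ` off `A_a`, and the chi-square divergence equals `(λ−1)²/λ`. -/
theorem half_block_obstruction (d : ℕ) [NeZero d] (hd : 2 ≤ d) (hdeven : Even d)
    (lam : ℝ) (hlam : 1 < lam)
    (W : ZMod d → ZMod d → ℝ)
    (hW : ∀ x y : ZMod d, W x y =
        if (y - x).val < d / 2 then 2 * lam / (d * (1 + lam)) else 2 / (d * (1 + lam))) :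
    (∀ x x' y : ZMod d, W x y / W x' y ∈ ({lam⁻¹, 1, lam} : Set ℝ))
    ∧ (∀ x x' y : ZMod d, W x y ≤ lam * W x' y)
    ∧ (∀ a : ZMod d,
        (∀ y : ZMod d, W (a + ((d / 2 : ℕ) : ZMod d)) y / W a y
            = if (y - a).val < d / 2 then lam⁻¹ else lam)
        ∧ ∑ y : ZMod d, (W (a + ((d / 2 : ℕ) : ZMod d)) y - W a y) ^ 2 / W a y
            = (lam - 1) ^ 2 / lam) := by
  obtain ⟨k, hk⟩ := hdeven
  have hk2 : d / 2 = k := by omega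
  have hk1 : 1 ≤ k := by omega
  have hdr : (d : ℝ) = 2 * k := by rw [hk]; push_cast; ring
  have hkr : (0 : ℝ) < (k : ℝ) := by exact_mod_cast hk1
  have hlam0 : (0 : ℝ) < lam := by linarith
  have hlam1 : (0 : ℝ) < 1 + lam := by linarith
  have hD : (0 : ℝ) < (d : ℝ) * (1 + lam) := by
    rw [hdr]; positivity
  set p : ℝ := 2 * lam / (d * (1 + lam)) with hp
  set q : ℝ := 2 / (d * (1 + lam)) with hq
  have hp0 : 0 < p := by rw [hp]; positivity
  have hq0 : 0 < q := by rw [hq]; positivity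
  have hpq : p = lam * q := by
    rw [hp, hq]; field_simp
  refine ⟨?_, ?_, ?_⟩
  · intro x x' y
    rw [hW x y, hW x' y]
    by_cases h1 : (y - x).val < d / 2 <;> by_cases h2 : (y - x').val < d / 2 <;>
      simp only [h1, h2, if_true, if_false, Set.mem_insert_iff, Set.mem_singleton_iff]
    · right; left; exact div_self (ne_of_gt hp0)
    · right; right
      rw [hpq, mul_div_assoc, div_self (ne_of_gt hq0), mul_one]
    · left
      rw [hpq]
      field_simp
    · right; left; exact div_self (ne_of_gt hq0)
  · intro x x' y
    rw [hW x y, hW x' y]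
    by_cases h1 : (y - x).val < d / 2 <;> by_cases h2 : (y - x').val < d / 2 <;>
      simp only [h1, h2, if_true, if_false]
    · nlinarith [hp0]
    · exact le_of_eq hpq
    · rw [hpq]; nlinarith [hq0]
    · nlinarith [hq0]
  · intro a
    have hWb : ∀ y : ZMod d, W (a + ((d / 2 : ℕ) : ZMod d)) y
        = if (y - a).val < d / 2 then q else p := by
      intro y
      rw [hW]
      have hsub : y - (a + ((d / 2 : ℕ) : ZMod d)) = (y - a) - ((k : ℕ) : ZMod d) := by
        rw [hk2]; ring
      rw [hsub, hk2]
      have hflip := hb_flip d k hk hd (y - a)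
      by_cases h : (y - a).val < k
      · rw [if_neg (by rw [hflip]; omega), if_pos h]
      · rw [if_pos (by rw [hflip]; omega), if_neg h]
    have hWa : ∀ y : ZMod d, W a y = if (y - a).val < d / 2 then p else q := fun y => hW a y
    constructor
    · intro y
      rw [hWb y, hWa y]
      by_cases h : (y - a).val < d / 2 <;> simp only [h, if_true, if_false]
      · rw [hpq]; field_simp
      · rw [hpq, mul_div_assoc, div_self (ne_of_gt hq0), mul_one]
    · have hterm : ∀ y : ZMod d,
          (W (a + ((d / 2 : ℕ) : ZMod d)) y - W a y) ^ 2 / W a y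
          = if (y - a).val < k then (q - p) ^ 2 / p else (p - q) ^ 2 / q := by
        intro y
        rw [hWb y, hWa y, hk2]
        by_cases h : (y - a).val < k <;> simp [h]
      rw [Finset.sum_congr rfl (fun y _ => hterm y)]
      rw [Finset.sum_ite]
      rw [Finset.sum_const, Finset.sum_const]
      rw [Finset.filter_not] at *
      have hc1 : (univ.filter (fun y : ZMod d => (y - a).val < k)).card = k :=
        hb_card d k (by omega) a
      have hc2 : (univ \ univ.filter (fun y : ZMod d => (y - a).val < k)).card = k := by
        rw [Finset.card_sdiff_of_subset (Finset.filter_subset _ _), hc1]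
        simp [Finset.card_univ, ZMod.card, hk]
      rw [hc1, hc2, nsmul_eq_mul, nsmul_eq_mul]
      rw [hp, hq]
      have hkne : (k : ℝ) ≠ 0 := ne_of_gt hkr
      field_simp [hdr]
      rw [hdr]; ring
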